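/- Let f be a function on the grid-cylinder [−ξ,d] (in z) with f(·,−ξ) = 0 and f_z(·,−ξ) = 0 at every grid point, and f(·,z) = 0 at boundary grid points for all z. Then the norm ‖f‖² := Σ_{j,s} h² ∫_{−ξ}^d |Δʰf(x_j,y_s,z)|² dz is equivalent to the full semidiscrete H² norm Σ_{j,s} h² ∫_{−ξ}^d (|f|² + |f_z|² + |f_zz|²) dz: there are constants c₁, c₂ > 0 (depending on ξ, d, h, N) with c₁‖f‖²_{H^{2,h}} ≤ ‖f‖² ≤ c₂‖f‖²_{H^{2,h}}. -/

import Mathlib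

open intervalIntegral

/-- The semidiscrete Laplacian `Δʰf = f_zz + f_xxʰ + f_yyʰ`. -/
noncomputable def discLap (h : ℝ) (f fzz : ℤ → ℤ → ℝ → ℂ) (j s : ℤ) (z : ℝ) : ℂ :=
  fzz j s z
    + (f (j - 1) s z - 2 * f j s z + f (j + 1) s z) / (h : ℂ) ^ 2
    + (f j (s - 1) z - 2 * f j s z + f (j) (s + 1) z) / (h : ℂ) ^ 2

lemma shift_sum_le (N : ℕ) (g : ℤ → ℝ) (hnn : ∀ j, 0 ≤ g j)
    (h0 : ∀ j, j ∉ Finset.Icc (1:ℤ) (N:ℤ) → g j = 0) (e : ℤ) :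
    ∑ j ∈ Finset.Icc (1:ℤ) (N:ℤ), g (j + e) ≤ ∑ j ∈ Finset.Icc (1:ℤ) (N:ℤ), g j := by
  set I := Finset.Icc (1:ℤ) (N:ℤ)
  have hinj : Function.Injective (fun j : ℤ => j + e) := add_left_injective e
  have h1 : ∑ j ∈ I, g (j + e) = ∑ j ∈ I.image (fun j => j + e), g j :=
    (Finset.sum_image (fun a _ b _ hab => hinj hab)).symm
  rw [h1]
  set T := I.image (fun j => j + e)
  calc ∑ j ∈ T, g j ≤ ∑ j ∈ T ∪ I, g j :=
        Finset.sum_le_sum_of_subset_of_nonneg Finset.subset_union_left (fun i _ _ => hnn i)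
    _ = ∑ j ∈ I, g j := by
        refine (Finset.sum_subset Finset.subset_union_right ?_).symm
        intro x _ hx; exact h0 x hx

lemma sq_abs_add_le (x y : ℂ) :
    ‖x + y‖ ^ 2 ≤ 2 * ‖x‖ ^ 2 + 2 * ‖y‖ ^ 2 := by
  have h := norm_add_le x y
  have h2 : ‖x + y‖ ^ 2 ≤ (‖x‖ + ‖y‖)^2 :=
    pow_le_pow_left₀ (norm_nonneg _) h 2
  nlinarith [sq_nonneg (‖x‖ - ‖y‖)]

lemma abs5_sq_le (x1 x2 x3 x4 x5 : ℂ) :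
    ‖x1 + x2 + x3 + x4 - 4*x5‖ ^ 2 ≤
      5 * ‖x1‖ ^ 2 + 5 * ‖x2‖ ^ 2 + 5 * ‖x3‖ ^ 2
        + 5 * ‖x4‖ ^ 2 + 80 * ‖x5‖ ^ 2 := by
  have htri : ‖x1 + x2 + x3 + x4 - 4*x5‖ ≤
      ‖x1‖ + ‖x2‖ + ‖x3‖ + ‖x4‖
        + 4 * ‖x5‖ := by
    calc ‖x1 + x2 + x3 + x4 - 4*x5‖
        ≤ ‖x1 + x2 + x3 + x4‖ + ‖4*x5‖ :=
          norm_sub_le _ _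
      _ ≤ (‖x1‖ + ‖x2‖ + ‖x3‖ + ‖x4‖)
            + 4 * ‖x5‖ := by
          have h4 : ‖4*x5‖ = 4 * ‖x5‖ := by
            rw [norm_mul]; norm_num
          rw [h4]
          gcongr
          calc ‖x1 + x2 + x3 + x4‖
              ≤ ‖x1 + x2 + x3‖ + ‖x4‖ := norm_add_le _ _
            _ ≤ ‖x1 + x2‖ + ‖x3‖ + ‖x4‖ := by
                gcongr; exact norm_add_le _ _
            _ ≤ ‖x1‖ + ‖x2‖ + ‖x3‖ + ‖x4‖ := by
                gcongr; exact norm_add_le _ _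
  have h2 : ‖x1 + x2 + x3 + x4 - 4*x5‖ ^ 2 ≤
      (‖x1‖ + ‖x2‖ + ‖x3‖ + ‖x4‖
        + 4 * ‖x5‖)^2 := pow_le_pow_left₀ (norm_nonneg _) htri 2
  nlinarith [sq_nonneg (‖x1‖ - ‖x2‖),
    sq_nonneg (‖x1‖ - ‖x3‖), sq_nonneg (‖x1‖ - ‖x4‖),
    sq_nonneg (‖x1‖ - 4*‖x5‖), sq_nonneg (‖x2‖ - ‖x3‖),
    sq_nonneg (‖x2‖ - ‖x4‖), sq_nonneg (‖x2‖ - 4*‖x5‖),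
    sq_nonneg (‖x3‖ - ‖x4‖), sq_nonneg (‖x3‖ - 4*‖x5‖),
    sq_nonneg (‖x4‖ - 4*‖x5‖)]

lemma abs_div_h (h : ℝ) (hh : 0 < h) (x : ℂ) :
    ‖x / (h:ℂ)^2‖ ^ 2 = ‖x‖ ^ 2 / h ^ 4 := by
  rw [norm_div, norm_pow, Complex.norm_real, Real.norm_of_nonneg hh.le, div_pow]
  ring_nf

lemma abs_sq_deriv (u u' : ℝ → ℂ) (hu : ∀ z, HasDerivAt u (u' z) z) (z : ℝ) :
    HasDerivAt (fun z => ‖u z‖ ^ 2)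
      (2 * ((u z).re * (u' z).re + (u z).im * (u' z).im)) z := by
  have h1 : HasDerivAt (fun z => (u z).re) ((u' z).re) z :=
    Complex.reCLM.hasFDerivAt.comp_hasDerivAt z (hu z)
  have h2 : HasDerivAt (fun z => (u z).im) ((u' z).im) z :=
    Complex.imCLM.hasFDerivAt.comp_hasDerivAt z (hu z)
  have heq : (fun z => ‖u z‖ ^ 2)
      = fun z => (u z).re * (u z).re + (u z).im * (u z).im := by
    funext y; rw [Complex.sq_norm, Complex.normSq_apply]
  rw [heq]
  exact ((h1.fun_mul h1).fun_add (h2.fun_mul h2)).congr_deriv (by ring)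

lemma cross_le (u v : ℂ) :
    2 * (u.re * v.re + u.im * v.im) ≤ ‖u‖ ^ 2 + ‖v‖ ^ 2 := by
  rw [Complex.sq_norm, Complex.sq_norm, Complex.normSq_apply, Complex.normSq_apply]
  nlinarith [sq_nonneg (u.re - v.re), sq_nonneg (u.im - v.im)]

lemma dsum_add (I : Finset ℤ) (F G : ℤ → ℤ → ℝ) :
    ∑ j ∈ I, ∑ s ∈ I, (F j s + G j s)
      = (∑ j ∈ I, ∑ s ∈ I, F j s) + (∑ j ∈ I, ∑ s ∈ I, G j s) := by
  simp [Finset.sum_add_distrib]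

lemma dsum_mul (c : ℝ) (I : Finset ℤ) (F : ℤ → ℤ → ℝ) :
    ∑ j ∈ I, ∑ s ∈ I, c * F j s = c * ∑ j ∈ I, ∑ s ∈ I, F j s := by
  simp [Finset.mul_sum]

set_option maxHeartbeats 1000000 in
/-- Equivalence of the norm `Σ h² ∫ |Δʰf|²` with the full semidiscrete `H²`-norm on the
space `H₀^{2,h}` of grid functions with `f = f_z = 0` at `z = −ξ` and vanishing at boundary
grid points: there are `c₁, c₂ > 0` (depending on `ξ, d, h, N`) with
`c₁‖f‖²_{H^{2,h}} ≤ Σ h² ∫ |Δʰf|² ≤ c₂‖f‖²_{H^{2,h}}`. -/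
theorem discLap_norm_equiv (ξ d h : ℝ) (N : ℕ) (hξ : 0 < ξ) (hd : 0 < d) (hh : 0 < h) :
    ∃ c₁ > (0 : ℝ), ∃ c₂ > (0 : ℝ), ∀ f fz fzz : ℤ → ℤ → ℝ → ℂ,
      (∀ j s z, HasDerivAt (f j s) (fz j s z) z) →
      (∀ j s z, HasDerivAt (fz j s) (fzz j s z) z) →
      (∀ j s, Continuous (fzz j s)) →
      (∀ j s z, (j ∉ Finset.Icc (1 : ℤ) (N : ℤ) ∨ s ∉ Finset.Icc (1 : ℤ) (N : ℤ)) →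
        f j s z = 0) →
      (∀ j s, f j s (-ξ) = 0) → (∀ j s, fz j s (-ξ) = 0) →
      c₁ * (∑ j ∈ Finset.Icc (1 : ℤ) (N : ℤ), ∑ s ∈ Finset.Icc (1 : ℤ) (N : ℤ),
            h ^ 2 * ∫ z in (-ξ)..d,
              ((‖f j s z‖) ^ 2 + (‖fz j s z‖) ^ 2
                + (‖fzz j s z‖) ^ 2)) ≤
        (∑ j ∈ Finset.Icc (1 : ℤ) (N : ℤ), ∑ s ∈ Finset.Icc (1 : ℤ) (N : ℤ),
            h ^ 2 * ∫ z in (-ξ)..d, (‖discLap h f fzz j s z‖) ^ 2) ∧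
      (∑ j ∈ Finset.Icc (1 : ℤ) (N : ℤ), ∑ s ∈ Finset.Icc (1 : ℤ) (N : ℤ),
            h ^ 2 * ∫ z in (-ξ)..d, (‖discLap h f fzz j s z‖) ^ 2) ≤
        c₂ * (∑ j ∈ Finset.Icc (1 : ℤ) (N : ℤ), ∑ s ∈ Finset.Icc (1 : ℤ) (N : ℤ),
            h ^ 2 * ∫ z in (-ξ)..d,
              ((‖f j s z‖) ^ 2 + (‖fz j s z‖) ^ 2
                + (‖fzz j s z‖) ^ 2)) := by
  classical
  have hh4 : (0:ℝ) < h^4 := by positivity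
  set I : Finset ℤ := Finset.Icc (1:ℤ) (N:ℤ) with hIdef
  set K1 : ℝ := 2 + 200 / h^4 with hK1def
  have hK1pos : 0 < K1 := by positivity
  set M : ℝ := 2 * Real.exp (K1*ξ) * Real.exp (K1*d) with hMdef
  have hMpos : 0 < M := by positivity
  set C1 : ℝ := (d+ξ)*M + 2 + (200/h^4)*((d+ξ)*M) with hC1def
  have hC1pos : 0 < C1 := by positivity
  refine ⟨1/C1, by positivity, K1, hK1pos, ?_⟩
  intro f fz fzz hf hfz hfzzc hbd hb0 hb0z
  -- continuity of the grid functions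
  have hfc : ∀ j s, Continuous (f j s) := fun j s =>
    Differentiable.continuous (fun z => (hf j s z).differentiableAt)
  have hfzc : ∀ j s, Continuous (fz j s) := fun j s =>
    Differentiable.continuous (fun z => (hfz j s z).differentiableAt)
  -- the lateral difference operator
  set A : ℤ → ℤ → ℝ → ℂ := fun j s z =>
    f (j-1) s z + f (j+1) s z + f j (s-1) z + f j (s+1) z - 4 * f j s z with hAdef
  have hdL : ∀ j s z, discLap h f fzz j s z = fzz j s z + A j s z / (h:ℂ)^2 := by
    intro j s z; simp only [discLap, hAdef]; ring
  have hAc : ∀ j s, Continuous (fun z => A j s z) := by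
    intro j s
    simp only [hAdef]
    exact ((((hfc _ _).add (hfc _ _)).add (hfc _ _)).add (hfc _ _)).sub
      (continuous_const.mul (hfc j s))
  have hdLc : ∀ j s, Continuous (fun z => discLap h f fzz j s z) := by
    intro j s
    have : (fun z => discLap h f fzz j s z) = fun z => fzz j s z + A j s z / (h:ℂ)^2 :=
      funext (hdL j s)
    rw [this]
    exact (hfzzc j s).add ((hAc j s).div_const _)
  -- the various sums
  set S0 : ℝ → ℝ := fun z => ∑ j ∈ I, ∑ s ∈ I, ‖f j s z‖^2 with hS0def
  set S2 : ℝ → ℝ := fun z => ∑ j ∈ I, ∑ s ∈ I, ‖fzz j s z‖^2 with hS2def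
  set G : ℝ → ℝ := fun z => ∑ j ∈ I, ∑ s ∈ I, ‖discLap h f fzz j s z‖^2
    with hGdef
  set SA : ℝ → ℝ := fun z => ∑ j ∈ I, ∑ s ∈ I, ‖A j s z‖^2 with hSAdef
  set Φ : ℝ → ℝ := fun z => ∑ j ∈ I, ∑ s ∈ I,
    (‖f j s z‖^2 + ‖fz j s z‖^2) with hΦdef
  have hS0nn : ∀ z, 0 ≤ S0 z := fun z =>
    Finset.sum_nonneg fun _ _ => Finset.sum_nonneg fun _ _ => by positivity
  have hS2nn : ∀ z, 0 ≤ S2 z := fun z =>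
    Finset.sum_nonneg fun _ _ => Finset.sum_nonneg fun _ _ => by positivity
  have hGnn : ∀ z, 0 ≤ G z := fun z =>
    Finset.sum_nonneg fun _ _ => Finset.sum_nonneg fun _ _ => by positivity
  have hΦnn : ∀ z, 0 ≤ Φ z := fun z =>
    Finset.sum_nonneg fun _ _ => Finset.sum_nonneg fun _ _ => by positivity
  have hS0Φ : ∀ z, S0 z ≤ Φ z := by
    intro z
    refine Finset.sum_le_sum fun j _ => Finset.sum_le_sum fun s _ => ?_
    have : (0:ℝ) ≤ ‖fz j s z‖^2 := by positivity
    linarith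
  -- continuity of the sums
  have hS0c : Continuous S0 := continuous_finset_sum _ fun j _ =>
    continuous_finset_sum _ fun s _ => ((continuous_norm.comp (hfc j s)).pow 2)
  have hS2c : Continuous S2 := continuous_finset_sum _ fun j _ =>
    continuous_finset_sum _ fun s _ => ((continuous_norm.comp (hfzzc j s)).pow 2)
  have hGc : Continuous G := continuous_finset_sum _ fun j _ =>
    continuous_finset_sum _ fun s _ => ((continuous_norm.comp (hdLc j s)).pow 2)
  have hΦc : Continuous Φ := continuous_finset_sum _ fun j _ =>
    continuous_finset_sum _ fun s _ =>
      ((continuous_norm.comp (hfc j s)).pow 2).add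
        ((continuous_norm.comp (hfzc j s)).pow 2)
  -- vanishing off the box
  have hzero : ∀ j s z, j ∉ I ∨ s ∉ I → ‖f j s z‖^2 = 0 := by
    intro j s z hjs; rw [hbd j s z hjs]; simp
  -- key bound : SA ≤ 100 * S0
  have hSA : ∀ z, SA z ≤ 100 * S0 z := by
    intro z
    have hstep : SA z ≤ ∑ j ∈ I, ∑ s ∈ I,
        (5 * ‖f (j-1) s z‖^2 + 5 * ‖f (j+1) s z‖^2
          + 5 * ‖f j (s-1) z‖^2 + 5 * ‖f j (s+1) z‖^2
          + 80 * ‖f j s z‖^2) := by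
      refine Finset.sum_le_sum fun j _ => Finset.sum_le_sum fun s _ => ?_
      exact abs5_sq_le _ _ _ _ _
    have hsplit : ∑ j ∈ I, ∑ s ∈ I,
        (5 * ‖f (j-1) s z‖^2 + 5 * ‖f (j+1) s z‖^2
          + 5 * ‖f j (s-1) z‖^2 + 5 * ‖f j (s+1) z‖^2
          + 80 * ‖f j s z‖^2)
        = 5 * (∑ j ∈ I, ∑ s ∈ I, ‖f (j-1) s z‖^2)
          + 5 * (∑ j ∈ I, ∑ s ∈ I, ‖f (j+1) s z‖^2)
          + 5 * (∑ j ∈ I, ∑ s ∈ I, ‖f j (s-1) z‖^2)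
          + 5 * (∑ j ∈ I, ∑ s ∈ I, ‖f j (s+1) z‖^2)
          + 80 * S0 z := by
      rw [dsum_add, dsum_add, dsum_add, dsum_add, dsum_mul, dsum_mul, dsum_mul,
        dsum_mul, dsum_mul]
    have hT1 : ∑ j ∈ I, ∑ s ∈ I, ‖f (j-1) s z‖^2 ≤ S0 z := by
      have := shift_sum_le N (fun j => ∑ s ∈ I, ‖f j s z‖^2)
        (fun j => Finset.sum_nonneg fun s _ => by positivity)
        (fun j hj => Finset.sum_eq_zero fun s _ => hzero j s z (Or.inl hj)) (-1)
      simpa [sub_eq_add_neg] using this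
    have hT2 : ∑ j ∈ I, ∑ s ∈ I, ‖f (j+1) s z‖^2 ≤ S0 z := by
      exact shift_sum_le N (fun j => ∑ s ∈ I, ‖f j s z‖^2)
        (fun j => Finset.sum_nonneg fun s _ => by positivity)
        (fun j hj => Finset.sum_eq_zero fun s _ => hzero j s z (Or.inl hj)) 1
    have hT3 : ∑ j ∈ I, ∑ s ∈ I, ‖f j (s-1) z‖^2 ≤ S0 z := by
      refine Finset.sum_le_sum fun j _ => ?_
      have := shift_sum_le N (fun s => ‖f j s z‖^2)
        (fun s => by positivity)
        (fun s hs => hzero j s z (Or.inr hs)) (-1)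
      simpa [sub_eq_add_neg] using this
    have hT4 : ∑ j ∈ I, ∑ s ∈ I, ‖f j (s+1) z‖^2 ≤ S0 z := by
      refine Finset.sum_le_sum fun j _ => ?_
      exact shift_sum_le N (fun s => ‖f j s z‖^2)
        (fun s => by positivity)
        (fun s hs => hzero j s z (Or.inr hs)) 1
    calc SA z ≤ _ := hstep
      _ = _ := hsplit
      _ ≤ 5 * S0 z + 5 * S0 z + 5 * S0 z + 5 * S0 z + 80 * S0 z := by
          gcongr
      _ = 100 * S0 z := by ring
  -- pointwise bounds between S2, G, S0
  have hS2G : ∀ z, S2 z ≤ 2 * G z + (200/h^4) * S0 z := by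
    intro z
    have h1 : ∀ j s, ‖fzz j s z‖^2
        ≤ 2 * ‖discLap h f fzz j s z‖^2 + (2/h^4) * ‖A j s z‖^2 := by
      intro j s
      have heq : fzz j s z = discLap h f fzz j s z + (-(A j s z / (h:ℂ)^2)) := by
        rw [hdL]; ring
      have hb := sq_abs_add_le (discLap h f fzz j s z) (-(A j s z / (h:ℂ)^2))
      rw [norm_neg, abs_div_h h hh] at hb
      rw [heq]
      calc ‖discLap h f fzz j s z + -(A j s z / (h:ℂ)^2)‖^2
          ≤ 2 * ‖discLap h f fzz j s z‖^2
            + 2 * (‖A j s z‖^2 / h^4) := hb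
        _ = 2 * ‖discLap h f fzz j s z‖^2
            + (2/h^4) * ‖A j s z‖^2 := by ring
    calc S2 z ≤ ∑ j ∈ I, ∑ s ∈ I,
          (2 * ‖discLap h f fzz j s z‖^2 + (2/h^4) * ‖A j s z‖^2) :=
        Finset.sum_le_sum fun j _ => Finset.sum_le_sum fun s _ => h1 j s
      _ = 2 * G z + (2/h^4) * SA z := by rw [dsum_add, dsum_mul, dsum_mul]
      _ ≤ 2 * G z + (2/h^4) * (100 * S0 z) := by
          have h2 : (0:ℝ) ≤ 2/h^4 := by positivity
          nlinarith [hSA z]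
      _ = 2 * G z + (200/h^4) * S0 z := by ring
  have hGS : ∀ z, G z ≤ 2 * S2 z + (200/h^4) * S0 z := by
    intro z
    have h1 : ∀ j s, ‖discLap h f fzz j s z‖^2
        ≤ 2 * ‖fzz j s z‖^2 + (2/h^4) * ‖A j s z‖^2 := by
      intro j s
      have hb := sq_abs_add_le (fzz j s z) (A j s z / (h:ℂ)^2)
      rw [abs_div_h h hh] at hb
      rw [hdL]
      calc ‖fzz j s z + A j s z / (h:ℂ)^2‖^2
          ≤ 2 * ‖fzz j s z‖^2 + 2 * (‖A j s z‖^2 / h^4) := hb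
        _ = 2 * ‖fzz j s z‖^2 + (2/h^4) * ‖A j s z‖^2 := by ring
    calc G z ≤ ∑ j ∈ I, ∑ s ∈ I,
          (2 * ‖fzz j s z‖^2 + (2/h^4) * ‖A j s z‖^2) :=
        Finset.sum_le_sum fun j _ => Finset.sum_le_sum fun s _ => h1 j s
      _ = 2 * S2 z + (2/h^4) * SA z := by rw [dsum_add, dsum_mul, dsum_mul]
      _ ≤ 2 * S2 z + (2/h^4) * (100 * S0 z) := by
          have h2 : (0:ℝ) ≤ 2/h^4 := by positivity
          nlinarith [hSA z]
      _ = 2 * S2 z + (200/h^4) * S0 z := by ring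
  -- derivative of Φ
  set P : ℝ → ℝ := fun z => ∑ j ∈ I, ∑ s ∈ I,
    (2 * ((f j s z).re * (fz j s z).re + (f j s z).im * (fz j s z).im)
      + 2 * ((fz j s z).re * (fzz j s z).re + (fz j s z).im * (fzz j s z).im)) with hPdef
  have hΦderiv : ∀ z, HasDerivAt Φ (P z) z := by
    intro z
    rw [hΦdef, hPdef]
    exact HasDerivAt.fun_sum fun j _ => HasDerivAt.fun_sum fun s _ =>
      (abs_sq_deriv (f j s) (fz j s) (hf j s) z).add
        (abs_sq_deriv (fz j s) (fzz j s) (hfz j s) z)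
  have hPc : Continuous P := by
    rw [hPdef]
    refine continuous_finset_sum _ fun j _ => continuous_finset_sum _ fun s _ => ?_
    have r1 := Complex.continuous_re.comp (hfc j s)
    have r2 := Complex.continuous_re.comp (hfzc j s)
    have r3 := Complex.continuous_re.comp (hfzzc j s)
    have i1 := Complex.continuous_im.comp (hfc j s)
    have i2 := Complex.continuous_im.comp (hfzc j s)
    have i3 := Complex.continuous_im.comp (hfzzc j s)
    exact (continuous_const.mul ((r1.mul r2).add (i1.mul i2))).add
      (continuous_const.mul ((r2.mul r3).add (i2.mul i3)))
  have hPK : ∀ z, P z ≤ K1 * Φ z + 2 * G z := by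
    intro z
    have h1 : P z ≤ 2 * Φ z + S2 z := by
      rw [hPdef]
      have hb : ∀ j ∈ I, ∀ s ∈ I,
          (2 * ((f j s z).re * (fz j s z).re + (f j s z).im * (fz j s z).im)
            + 2 * ((fz j s z).re * (fzz j s z).re + (fz j s z).im * (fzz j s z).im))
          ≤ 2 * (‖f j s z‖^2 + ‖fz j s z‖^2)
            + ‖fzz j s z‖^2 := by
        intro j _ s _
        have c1 := cross_le (f j s z) (fz j s z)
        have c2 := cross_le (fz j s z) (fzz j s z)
        have c3 : (0:ℝ) ≤ ‖f j s z‖^2 := by positivity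
        linarith
      calc ∑ j ∈ I, ∑ s ∈ I,
            (2 * ((f j s z).re * (fz j s z).re + (f j s z).im * (fz j s z).im)
              + 2 * ((fz j s z).re * (fzz j s z).re + (fz j s z).im * (fzz j s z).im))
          ≤ ∑ j ∈ I, ∑ s ∈ I,
            (2 * (‖f j s z‖^2 + ‖fz j s z‖^2)
              + ‖fzz j s z‖^2) :=
            Finset.sum_le_sum fun j hj => Finset.sum_le_sum fun s hs => hb j hj s hs
        _ = 2 * Φ z + S2 z := by rw [dsum_add, dsum_mul]
    have h2 := hS2G z
    have h3 : (200/h^4) * S0 z ≤ (200/h^4) * Φ z :=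
      mul_le_mul_of_nonneg_left (hS0Φ z) (by positivity)
    rw [hK1def]; linarith
  -- Gronwall
  set IG : ℝ := ∫ z in (-ξ)..d, G z with hIGdef
  have hIGnn : 0 ≤ IG :=
    intervalIntegral.integral_nonneg (by linarith) (fun u _ => hGnn u)
  have hwderiv : ∀ z, HasDerivAt (fun z => Φ z * Real.exp (-K1*z))
      ((P z - K1 * Φ z) * Real.exp (-K1*z)) z := by
    intro z
    have hlin : HasDerivAt (fun z : ℝ => -K1*z) (-K1) z := by
      simpa using (hasDerivAt_id z).const_mul (-K1)
    have he : HasDerivAt (fun z => Real.exp (-K1*z)) (Real.exp (-K1*z) * (-K1)) z :=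
      hlin.exp
    exact ((hΦderiv z).fun_mul he).congr_deriv (by ring)
  have hΦ0 : Φ (-ξ) = 0 := by
    rw [hΦdef]
    refine Finset.sum_eq_zero fun j _ => Finset.sum_eq_zero fun s _ => ?_
    rw [hb0 j s, hb0z j s]; simp
  have hΦle : ∀ z ∈ Set.Icc (-ξ) d, Φ z ≤ M * IG := by
    intro z hz
    obtain ⟨hz1, hz2⟩ := hz
    have hwint : IntervalIntegrable (fun ρ => (P ρ - K1 * Φ ρ) * Real.exp (-K1*ρ))
        MeasureTheory.volume (-ξ) z :=
      ((hPc.sub (continuous_const.mul hΦc)).mul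
        (Real.continuous_exp.comp (continuous_const.mul continuous_id))).intervalIntegrable _ _
    have hFTC : ∫ ρ in (-ξ)..z, (P ρ - K1 * Φ ρ) * Real.exp (-K1*ρ)
        = Φ z * Real.exp (-K1*z) - Φ (-ξ) * Real.exp (-K1*(-ξ)) :=
      integral_eq_sub_of_hasDerivAt (fun ρ _ => hwderiv ρ) hwint
    have hmono : ∫ ρ in (-ξ)..z, (P ρ - K1 * Φ ρ) * Real.exp (-K1*ρ)
        ≤ ∫ ρ in (-ξ)..z, 2 * Real.exp (K1*ξ) * G ρ := by
      refine integral_mono_on hz1 hwint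
        ((continuous_const.mul hGc).intervalIntegrable _ _) ?_
      intro ρ hρ
      have h1 : P ρ - K1 * Φ ρ ≤ 2 * G ρ := by linarith [hPK ρ]
      have h2 : Real.exp (-K1*ρ) ≤ Real.exp (K1*ξ) := by
        apply Real.exp_le_exp.2
        nlinarith [hρ.1]
      calc (P ρ - K1 * Φ ρ) * Real.exp (-K1*ρ) ≤ (2 * G ρ) * Real.exp (-K1*ρ) :=
            mul_le_mul_of_nonneg_right h1 (Real.exp_nonneg _)
        _ ≤ (2 * G ρ) * Real.exp (K1*ξ) :=
            mul_le_mul_of_nonneg_left h2 (by nlinarith [hGnn ρ])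
        _ = 2 * Real.exp (K1*ξ) * G ρ := by ring
    have hmono2 : ∫ ρ in (-ξ)..z, 2 * Real.exp (K1*ξ) * G ρ
        ≤ ∫ ρ in (-ξ)..d, 2 * Real.exp (K1*ξ) * G ρ := by
      refine integral_mono_interval le_rfl hz1 hz2 ?_
        ((continuous_const.mul hGc).intervalIntegrable _ _)
      filter_upwards with ρ
      exact mul_nonneg (by positivity) (hGnn ρ)
    have hconst : ∫ ρ in (-ξ)..d, 2 * Real.exp (K1*ξ) * G ρ
        = 2 * Real.exp (K1*ξ) * IG := by
      rw [hIGdef, ← intervalIntegral.integral_const_mul]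
    have hx : Φ z * Real.exp (-K1*z) ≤ 2 * Real.exp (K1*ξ) * IG := by
      rw [hΦ0] at hFTC
      simp only [zero_mul, sub_zero] at hFTC
      rw [← hFTC, ← hconst]
      exact le_trans hmono hmono2
    have hmul := mul_le_mul_of_nonneg_right hx (Real.exp_nonneg (K1*z))
    have hcancel : Φ z * Real.exp (-K1*z) * Real.exp (K1*z) = Φ z := by
      rw [mul_assoc, ← Real.exp_add]
      norm_num
    rw [hcancel] at hmul
    calc Φ z ≤ 2 * Real.exp (K1*ξ) * IG * Real.exp (K1*z) := hmul
      _ ≤ 2 * Real.exp (K1*ξ) * IG * Real.exp (K1*d) := by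
          have hzz : Real.exp (K1*z) ≤ Real.exp (K1*d) := by
            apply Real.exp_le_exp.2
            nlinarith
          exact mul_le_mul_of_nonneg_left hzz (by positivity)
      _ = M * IG := by rw [hMdef]; ring
  -- rearranging the goal sums
  have hd' : -ξ ≤ d := by linarith
  have hsum_eq : ∀ (q : ℤ → ℤ → ℝ → ℝ), (∀ j s, Continuous (q j s)) →
      ∑ j ∈ I, ∑ s ∈ I, (h^2 * ∫ z in (-ξ)..d, q j s z)
        = h^2 * ∫ z in (-ξ)..d, ∑ j ∈ I, ∑ s ∈ I, q j s z := by
    intro q hq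
    rw [integral_finset_sum (fun j _ =>
      (continuous_finset_sum _ fun s _ => hq j s).intervalIntegrable _ _)]
    rw [Finset.mul_sum]
    refine Finset.sum_congr rfl fun j _ => ?_
    rw [integral_finset_sum (fun s _ => (hq j s).intervalIntegrable _ _), Finset.mul_sum]
  have hH2 : ∑ j ∈ I, ∑ s ∈ I, (h^2 * ∫ z in (-ξ)..d,
        (‖f j s z‖^2 + ‖fz j s z‖^2 + ‖fzz j s z‖^2))
      = h^2 * ∫ z in (-ξ)..d, (Φ z + S2 z) := by
    have hq1 : ∀ j s : ℤ, Continuous (fun z =>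
        ‖f j s z‖^2 + ‖fz j s z‖^2 + ‖fzz j s z‖^2) := by
      intro j s
      exact (((continuous_norm.comp (hfc j s)).pow 2).add
        ((continuous_norm.comp (hfzc j s)).pow 2)).add
        ((continuous_norm.comp (hfzzc j s)).pow 2)
    rw [hsum_eq _ hq1]
    congr 1
    refine intervalIntegral.integral_congr fun z _ => ?_
    rw [hΦdef, hS2def]
    simp only
    rw [← dsum_add I (fun j s => ‖f j s z‖^2 + ‖fz j s z‖^2)
      (fun j s => ‖fzz j s z‖^2)]
  have hGsum : ∑ j ∈ I, ∑ s ∈ I,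
        (h^2 * ∫ z in (-ξ)..d, ‖discLap h f fzz j s z‖^2) = h^2 * IG := by
    have hq2 : ∀ j s : ℤ, Continuous (fun z => ‖discLap h f fzz j s z‖^2) := by
      intro j s
      exact (continuous_norm.comp (hdLc j s)).pow 2
    rw [hsum_eq _ hq2]
  -- integral bounds
  have hΦint : IntervalIntegrable Φ MeasureTheory.volume (-ξ) d :=
    hΦc.intervalIntegrable _ _
  have hS2int : IntervalIntegrable S2 MeasureTheory.volume (-ξ) d :=
    hS2c.intervalIntegrable _ _
  have hintΦ : ∫ z in (-ξ)..d, Φ z ≤ (d+ξ) * (M * IG) := by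
    calc ∫ z in (-ξ)..d, Φ z ≤ ∫ _z in (-ξ)..d, M * IG :=
        integral_mono_on hd' hΦint intervalIntegrable_const hΦle
      _ = (d - (-ξ)) • (M * IG) := integral_const _
      _ = (d+ξ) * (M * IG) := by rw [smul_eq_mul]; ring
  have hintS2 : ∫ z in (-ξ)..d, S2 z ≤ 2 * IG + (200/h^4) * ((d+ξ) * (M * IG)) := by
    have hptw : ∀ z ∈ Set.Icc (-ξ) d, S2 z ≤ 2 * G z + (200/h^4) * Φ z := by
      intro z _
      have h3 : (200/h^4) * S0 z ≤ (200/h^4) * Φ z :=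
        mul_le_mul_of_nonneg_left (hS0Φ z) (by positivity)
      linarith [hS2G z]
    calc ∫ z in (-ξ)..d, S2 z ≤ ∫ z in (-ξ)..d, (2 * G z + (200/h^4) * Φ z) :=
        integral_mono_on hd' hS2int
          (((continuous_const.mul hGc).add (continuous_const.mul hΦc)).intervalIntegrable _ _)
          hptw
      _ = 2 * IG + (200/h^4) * ∫ z in (-ξ)..d, Φ z := by
          rw [integral_add (f := fun z => 2 * G z) (g := fun z => (200/h^4) * Φ z)
            ((continuous_const.mul hGc).intervalIntegrable _ _)
            ((continuous_const.mul hΦc).intervalIntegrable _ _),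
            intervalIntegral.integral_const_mul, intervalIntegral.integral_const_mul, hIGdef]
      _ ≤ 2 * IG + (200/h^4) * ((d+ξ) * (M * IG)) := by
          have := mul_le_mul_of_nonneg_left hintΦ (by positivity : (0:ℝ) ≤ 200/h^4)
          linarith
  have htotal : ∫ z in (-ξ)..d, (Φ z + S2 z) ≤ C1 * IG := by
    rw [integral_add hΦint hS2int]
    rw [hC1def]
    have := hintΦ
    have := hintS2
    nlinarith
  constructor
  · -- lower bound
    rw [hH2, hGsum]
    have h1 : (1/C1) * (h^2 * ∫ z in (-ξ)..d, (Φ z + S2 z))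
        ≤ (1/C1) * (h^2 * (C1 * IG)) := by
      have hnn : (0:ℝ) ≤ (1/C1) * h^2 := by positivity
      have := mul_le_mul_of_nonneg_left htotal (by positivity : (0:ℝ) ≤ h^2)
      exact mul_le_mul_of_nonneg_left this (by positivity)
    calc (1/C1) * (h^2 * ∫ z in (-ξ)..d, (Φ z + S2 z)) ≤ (1/C1) * (h^2 * (C1 * IG)) := h1
      _ = h^2 * IG := by
          field_simp
  · -- upper bound
    rw [hH2, hGsum]
    have hptw : ∀ z ∈ Set.Icc (-ξ) d, G z ≤ K1 * (Φ z + S2 z) := by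
      intro z _
      have h3 : (200/h^4) * S0 z ≤ (200/h^4) * Φ z :=
        mul_le_mul_of_nonneg_left (hS0Φ z) (by positivity)
      have h4 := hGS z
      have h5 := hΦnn z
      have h6 := hS2nn z
      have h7 : (0:ℝ) ≤ (200/h^4) * S2 z := mul_nonneg (by positivity) h6
      rw [hK1def]
      have h8 : (2+200/h^4)*(Φ z + S2 z)
          = 2*Φ z + 2*S2 z + (200/h^4)*Φ z + (200/h^4)*S2 z := by ring
      linarith
    have hIGle : IG ≤ K1 * ∫ z in (-ξ)..d, (Φ z + S2 z) := by
      rw [hIGdef]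
      calc ∫ z in (-ξ)..d, G z ≤ ∫ z in (-ξ)..d, K1 * (Φ z + S2 z) :=
          integral_mono_on hd' (hGc.intervalIntegrable _ _)
            ((continuous_const.mul (hΦc.add hS2c)).intervalIntegrable _ _) hptw
        _ = K1 * ∫ z in (-ξ)..d, (Φ z + S2 z) := intervalIntegral.integral_const_mul _ _
    calc h^2 * IG ≤ h^2 * (K1 * ∫ z in (-ξ)..d, (Φ z + S2 z)) :=
        mul_le_mul_of_nonneg_left hIGle (by positivity)
      _ = K1 * (h^2 * ∫ z in (-ξ)..d, (Φ z + S2 z)) := by ring
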